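/- arXiv:2003.13125 — 2 statements merged into one kernel-verified Lean document; each statement's English description precedes it below -/
import Mathlib

section
/- Let l ≥ 1, q ≥ 0 and 0 ≤ r < l be natural numbers. Define a sequence N_1, …, N_l by N_l = q·l + r and, for 1 ≤ k ≤ l−1, N_k = ⌊ k·N_{k+1} / (k+1) ⌋. Then N_k = q·k + r + k − l for every k with l − r ≤ k ≤ l, and N_k = q·k for every k with 1 ≤ k ≤ l − r. -/
/-- Closed form for the recursively defined sequence `N_l = q·l + r`,
`N_k = ⌊k·N_{k+1}/(k+1)⌋`: one has `N_k = q·k + r + k − l` for `l − r ≤ k ≤ l`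
and `N_k = q·k` for `1 ≤ k ≤ l − r`.  Here `/` is natural (floor) division. -/
theorem stmt2 (l q r : ℕ) (hl : 1 ≤ l) (hr : r < l) (N : ℕ → ℕ)
    (hNl : N l = q * l + r)
    (hrec : ∀ k, 1 ≤ k → k ≤ l - 1 → N k = k * N (k + 1) / (k + 1)) :
    (∀ k, l - r ≤ k → k ≤ l → N k = q * k + r + k - l) ∧
      (∀ k, 1 ≤ k → k ≤ l - r → N k = q * k) := by
  have H : ∀ j, j ≤ l - 1 → N (l - j) = q * (l - j) + (r + (l - j) - l) := by
    intro j
    induction j with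
    | zero => intro _; simpa using hNl
    | succ j ih =>
      intro hj
      have hj' : j ≤ l - 1 := by omega
      set k := l - (j + 1) with hk
      have hk1 : 1 ≤ k := by omega
      have hk2 : k + 1 = l - j := by omega
      have hNk1 : N (k + 1) = q * (k + 1) + (r + (k + 1) - l) := by
        rw [hk2]; exact ih hj'
      have hrk : N k = k * N (k + 1) / (k + 1) := hrec k hk1 (by omega)
      by_cases hs : r + (k + 1) ≤ l
      · -- s = 0 case
        have hs0 : r + (k + 1) - l = 0 := by omega
        have hrkl : r + k - l = 0 := by omega
        rw [hrk, hNk1, hs0, hrkl, add_zero, add_zero]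
        rw [show k * (q * (k + 1)) = q * k * (k + 1) by ring]
        exact Nat.mul_div_cancel _ (by omega)
      · -- s ≥ 1 case
        obtain ⟨t, ht⟩ : ∃ t, r + (k + 1) - l = t + 1 := ⟨r + k - l, by omega⟩
        have htk : t < k := by omega
        have key : k * N (k + 1) = (k + 1) * (q * k + t) + (k - t) := by
          rw [hNk1, ht]
          have h1 : t ≤ k := le_of_lt htk
          zify [h1]
          ring
        rw [hrk, key, Nat.mul_add_div (by omega), Nat.div_eq_of_lt (by omega),
          add_zero]
        omega
  constructor
  · intro k hk1 hk2
    have := H (l - k) (by omega)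
    rw [show l - (l - k) = k by omega] at this
    have hge : l ≤ r + k := by omega
    set m := q * k
    omega
  · intro k hk1 hk2
    have := H (l - k) (by omega)
    rw [show l - (l - k) = k by omega] at this
    set m := q * k
    omega
end

section
/- Let l ≥ 1, q ≥ 0 and 0 ≤ r < l be natural numbers, and define N_1, …, N_l by N_l = q·l + r and N_k = ⌊ k·N_{k+1} / (k+1) ⌋ for 1 ≤ k ≤ l−1. Then 2·∑_{k=1}^{l−1} N_k = (l−1)·l·q + (r−1)·r. -/
lemma stmt5_div_helper (m s q : ℕ) (hm : 1 ≤ m) (hs : s < m) :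
    (m - 1) * (q * m + s) / m = q * (m - 1) + (s - 1) := by
  rcases Nat.eq_zero_or_pos s with h0 | hpos
  · subst h0
    simp only [Nat.add_zero, Nat.zero_le, Nat.sub_zero]
    rw [show (m - 1) * (q * m) = m * ((m - 1) * q) by ring, Nat.mul_div_cancel_left _ hm]
    ring
  · have key : (m - 1) * (q * m + s) = m * (q * (m - 1) + (s - 1)) + (m - s) := by
      obtain ⟨s', rfl⟩ : ∃ s', s = s' + 1 := ⟨s - 1, by omega⟩
      obtain ⟨d, rfl⟩ : ∃ d, m = s' + 1 + d + 1 := ⟨m - s' - 2, by omega⟩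
      simp only [Nat.add_sub_cancel]
      rw [show s' + 1 + d + 1 - (s' + 1) = d + 1 from by omega]
      ring
    rw [key, Nat.mul_add_div (by omega), Nat.div_eq_of_lt (by omega), Nat.add_zero]

lemma stmt5_gauss : ∀ n : ℕ, 2 * ∑ k ∈ Finset.Icc 1 n, k = n * (n + 1) := by
  intro n
  induction n with
  | zero => simp
  | succ n ih =>
    rw [Finset.sum_Icc_succ_top (by omega), Nat.mul_add, ih]
    ring

lemma stmt5_sum_helper : ∀ m r : ℕ, r ≤ m →
    2 * ∑ k ∈ Finset.Icc 1 m, (r - (m + 1 - k)) = (r - 1) * r := by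
  intro m
  induction m with
  | zero => intro r hr; interval_cases r; simp
  | succ m ih =>
    intro r hr
    rw [Finset.sum_Icc_succ_top (by omega)]
    have hcongr : ∀ k ∈ Finset.Icc 1 m, (r - (m + 1 + 1 - k)) = (r - 1) - (m + 1 - k) := by
      intro k hk; simp only [Finset.mem_Icc] at hk; omega
    rw [Finset.sum_congr rfl hcongr]
    have hthis := ih (r - 1) (by omega)
    have ht : r - (m + 1 + 1 - (m + 1)) = r - 1 := by omega
    rw [ht, Nat.mul_add, hthis]
    rcases Nat.lt_or_ge r 2 with h2 | h2
    · interval_cases r <;> simp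
    · obtain ⟨r', rfl⟩ : ∃ r', r = r' + 2 := ⟨r - 2, by omega⟩
      simp only [Nat.add_sub_cancel, show r' + 2 - 1 = r' + 1 from by omega,
        show r' + 1 - 1 = r' from by omega]
      ring

/-- Closed-form evaluation `2·∑_{k=1}^{l−1} N_k = (l−1)·l·q + (r−1)·r` for the recursively
defined sequence `N_l = q·l + r`, `N_k = ⌊k·N_{k+1}/(k+1)⌋`.  Here `/` is natural (floor)
division; for `r = 0` the term `(r−1)·r` is `0` (as it is with truncated subtraction). -/
theorem stmt5 (l q r : ℕ) (hl : 1 ≤ l) (hr : r < l) (N : ℕ → ℕ)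
    (hNl : N l = q * l + r)
    (hrec : ∀ k, 1 ≤ k → k ≤ l - 1 → N k = k * N (k + 1) / (k + 1)) :
    2 * ∑ k ∈ Finset.Icc 1 (l - 1), N k = (l - 1) * l * q + (r - 1) * r := by
  have key : ∀ j, j ≤ l - 1 → N (l - j) = q * (l - j) + (r - j) := by
    intro j
    induction j with
    | zero => intro _; simpa using hNl
    | succ j ih =>
      intro hj
      have hj' : j ≤ l - 1 := by omega
      have h1 : 1 ≤ l - (j + 1) := by omega
      have h2 : l - (j + 1) ≤ l - 1 := by omega
      have hstep : l - (j + 1) + 1 = l - j := by omega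
      have hrw := hrec (l - (j + 1)) h1 h2
      rw [hstep, ih hj'] at hrw
      rw [hrw]
      have hml : l - (j + 1) = (l - j) - 1 := by omega
      have hs : r - j < l - j := by omega
      rw [hml, stmt5_div_helper (l - j) (r - j) q (by omega) hs,
        show r - j - 1 = r - (j + 1) from by omega]
  have hsum : ∀ k ∈ Finset.Icc 1 (l - 1), N k = q * k + (r - ((l - 1) + 1 - k)) := by
    intro k hk
    simp only [Finset.mem_Icc] at hk
    have hk2 := key (l - k) (by omega)
    have hlk : l - (l - k) = k := by omega
    rw [hlk] at hk2
    rw [hk2]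
    congr 1
    omega
  rw [Finset.sum_congr rfl hsum, Finset.sum_add_distrib, Nat.mul_add,
    stmt5_sum_helper (l - 1) r (by omega)]
  congr 1
  rw [← Finset.mul_sum]
  have hg := stmt5_gauss (l - 1)
  rw [show l - 1 + 1 = l from by omega] at hg
  calc 2 * (q * ∑ k ∈ Finset.Icc 1 (l - 1), k)
      = q * (2 * ∑ k ∈ Finset.Icc 1 (l - 1), k) := by ring
    _ = q * ((l - 1) * l) := by rw [hg]
    _ = (l - 1) * l * q := by ring
end
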